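/- Let n > t ≥ 1 be integers and let A be a finite set of natural numbers with A ⊆ {0, 1, …, C(n,t) − 1} and |A| = C(n−1,t). If, as real numbers, (n/(4t) − 1)·C(n−1,t−1) > 1/2, then A contains two elements a and b such that b = 2a and a ≠ 0. -/
import Mathlib


theorem stmt_10 (n t : ℕ) (ht : 1 ≤ t) (htn : t < n)
    (A : Finset ℕ) (hA : A ⊆ Finset.range (n.choose t))
    (hcard : A.card = (n - 1).choose t)
    (hineq : ((n : ℝ) / (4 * (t : ℝ)) - 1) * (((n - 1).choose (t - 1) : ℝ)) > 1 / 2) :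
    ∃ a ∈ A, ∃ b ∈ A, b = 2 * a ∧ a ≠ 0 := by
  by_contra hcon
  push_neg at hcon
  set N := n.choose t with hN
  set C := (n - 1).choose (t - 1) with hC
  -- key identity: t * N = n * C
  have hid : t * N = n * C := by
    have h1 := Nat.add_one_mul_choose_eq (n - 1) (t - 1)
    have hn1 : n - 1 + 1 = n := by omega
    have ht1 : t - 1 + 1 = t := by omega
    simp only [Nat.succ_eq_add_one, hn1, ht1] at h1
    rw [hN, hC]
    linarith [h1]
  -- Pascal: N = C(n-1, t) + C
  have hpascal : N = (n - 1).choose t + C := by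
    have := Nat.choose_succ_succ (n - 1) (t - 1)
    have hn1 : n - 1 + 1 = n := by omega
    have ht1 : t - 1 + 1 = t := by omega
    simp only [Nat.succ_eq_add_one, hn1, ht1] at this
    omega
  -- From the real inequality: N ≥ 4*C + 3
  have ht0 : (0 : ℝ) < (t : ℝ) := by exact_mod_cast ht
  have hidR : (t : ℝ) * N = (n : ℝ) * C := by exact_mod_cast hid
  have hkey : 4 * C + 3 ≤ N := by
    have h2 : ((n : ℝ) - 4 * t) * C > 2 * t := by
      have h3 : ((n : ℝ) / (4 * t) - 1) * C * (4 * t) > (1 / 2) * (4 * t) := by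
        apply mul_lt_mul_of_pos_right hineq
        positivity
      have h4 : ((n : ℝ) / (4 * t)) * (4 * t) = n := by
        field_simp
      nlinarith [h3, h4]
    have h5 : (N : ℝ) > 4 * C + 2 := by nlinarith
    have h6 : (4 * C + 2 : ℕ) < N := by exact_mod_cast h5
    omega
  set K := (N - 3) / 4 + 1 with hK
  set B := Finset.range N \ A with hB
  have hBcard : B.card = C := by
    rw [hB, Finset.card_sdiff_of_subset hA, Finset.card_range, hcard]
    omega
  -- injection from range K into B
  set f : ℕ → ℕ := fun k => if 2 * k + 1 ∈ A then 2 * (2 * k + 1) else 2 * k + 1 with hf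
  have hrange : ∀ k ∈ Finset.range K, 4 * k + 3 ≤ N := by
    intro k hk
    simp only [Finset.mem_range, hK] at hk
    omega
  have hmaps : ∀ k ∈ Finset.range K, f k ∈ B := by
    intro k hk
    have h4k := hrange k hk
    by_cases hmem : 2 * k + 1 ∈ A
    · have hnot : 2 * (2 * k + 1) ∉ A := by
        intro hin
        have := hcon (2 * k + 1) hmem (2 * (2 * k + 1)) hin rfl
        omega
      simp only [hf, hmem, if_pos, hB, Finset.mem_sdiff, Finset.mem_range]
      exact ⟨by omega, hnot⟩
    · have : f k = 2 * k + 1 := if_neg hmem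
      rw [this, hB, Finset.mem_sdiff, Finset.mem_range]
      exact ⟨by omega, hmem⟩
  have hinj : Set.InjOn f (Finset.range K) := by
    intro k hk k' hk' heq
    simp only [hf] at heq
    by_cases h1 : 2 * k + 1 ∈ A <;> by_cases h2 : 2 * k' + 1 ∈ A <;>
      simp [h1, h2] at heq <;> omega
  have hle : K ≤ B.card := by
    have := Finset.card_le_card_of_injOn f hmaps hinj
    simpa using this
  rw [hBcard] at hle
  omega
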